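/- Let θ := arccos(−(x_max+x_min)/(x_max−x_min)) ∈ (0,π) and let δ ∈ (0,π) be the unique angle with sin(β)·cos(δ) = (ρ·√(σ₂₂/σ₁₁) + cos β)·sin(δ) (i.e. cot δ = (ρ√(σ₂₂/σ₁₁) + cos β)/sin β; equivalently tan δ = sin β/(ρ√(σ₂₂/σ₁₁) + cos β) when the denominator is nonzero). Then the nonzero intersection of the ellipse with the line r₁₂x + r₂₂y = 0 occurs at parameter 2δ − θ: x̃(2δ − θ) = x* and ỹ(2δ − θ) = −ρ·x*. -/

import Mathlib

open Real

set_option maxHeartbeats 1000000 in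
theorem stmt12
    (σ11 σ12 σ22 μ1 μ2 : ℝ)
    (hσ11 : 0 < σ11) (hσ22 : 0 < σ22)
    (hdet : 0 < σ11 * σ22 - σ12 ^ 2)
    (hμ1 : 0 < μ1) (hμ2 : 0 < μ2)
    (detS D1 D2 xmin xmax ymin ymax β : ℝ)
    (hdetS : detS = σ11 * σ22 - σ12 ^ 2)
    (hD1 : D1 = (μ2 * σ12 - μ1 * σ22) ^ 2 + μ2 ^ 2 * detS)
    (hxmin : xmin = (μ2 * σ12 - μ1 * σ22 - Real.sqrt D1) / detS)
    (hxmax : xmax = (μ2 * σ12 - μ1 * σ22 + Real.sqrt D1) / detS)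
    (hD2 : D2 = (μ1 * σ12 - μ2 * σ11) ^ 2 + μ1 ^ 2 * detS)
    (hymin : ymin = (μ1 * σ12 - μ2 * σ11 - Real.sqrt D2) / detS)
    (hymax : ymax = (μ1 * σ12 - μ2 * σ11 + Real.sqrt D2) / detS)
    (hβ : β = Real.arccos (-σ12 / Real.sqrt (σ11 * σ22)))
    (xt yt : ℝ → ℝ)
    (hxt : ∀ t, xt t = (xmax + xmin) / 2 + ((xmax - xmin) / 2) * Real.cos t)
    (hyt : ∀ t, yt t = (ymax + ymin) / 2 + ((ymax - ymin) / 2) * Real.cos (t - β))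
    (r12 r22 : ℝ) (hr22 : 0 < r22)
    (ρ : ℝ) (hρ : ρ = r12 / r22)
    (xstar : ℝ)
    (hxstar : xstar = 2 * (μ2 * ρ - μ1) / (σ11 - 2 * σ12 * ρ + σ22 * ρ ^ 2))
    (θ : ℝ) (hθ : θ = Real.arccos (-(xmax + xmin) / (xmax - xmin)))
    (δ : ℝ) (hδ : δ ∈ Set.Ioo 0 Real.pi)
    (hδeq : Real.sin β * Real.cos δ =
      (ρ * Real.sqrt (σ22 / σ11) + Real.cos β) * Real.sin δ) :
    xt (2 * δ - θ) = xstar ∧ yt (2 * δ - θ) = -ρ * xstar := by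
  have hdetS0 : 0 < detS := by rw [hdetS]; exact hdet
  have hdetS' : detS ≠ 0 := hdetS0.ne'
  have hD1p : 0 < D1 := by
    rw [hD1]
    have h1 := mul_pos (pow_pos hμ2 2) hdetS0
    have h2 := sq_nonneg (μ2 * σ12 - μ1 * σ22)
    linarith
  have hD2p : 0 < D2 := by
    rw [hD2]
    have h1 := mul_pos (pow_pos hμ1 2) hdetS0
    have h2 := sq_nonneg (μ1 * σ12 - μ2 * σ11)
    linarith
  set sm := Real.sqrt (σ11 * σ22) with hsmdef
  set sd := Real.sqrt detS with hsddef
  set e := Real.sqrt D1 with hedef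
  set f := Real.sqrt D2 with hfdef
  clear_value sm sd e f
  have hsmp : 0 < sm := by rw [hsmdef]; exact Real.sqrt_pos.mpr (mul_pos hσ11 hσ22)
  have hsdp : 0 < sd := by rw [hsddef]; exact Real.sqrt_pos.mpr hdetS0
  have hep : 0 < e := by rw [hedef]; exact Real.sqrt_pos.mpr hD1p
  have hfp : 0 < f := by rw [hfdef]; exact Real.sqrt_pos.mpr hD2p
  have hsm2 : sm ^ 2 = σ11 * σ22 := by
    rw [hsmdef]; exact Real.sq_sqrt (mul_pos hσ11 hσ22).le
  have hsd2 : sd ^ 2 = detS := by rw [hsddef]; exact Real.sq_sqrt hdetS0.le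
  have he2 : e ^ 2 = D1 := by rw [hedef]; exact Real.sq_sqrt hD1p.le
  have hf2 : f ^ 2 = D2 := by rw [hfdef]; exact Real.sq_sqrt hD2p.le
  -- key sqrt identity : f * σ22 = e * sm
  have hkeym : f * σ22 = e * sm := by
    have h1 : Real.sqrt D2 * Real.sqrt (σ22 ^ 2) = Real.sqrt (D1 * (σ11 * σ22)) := by
      rw [← Real.sqrt_mul hD2p.le]
      congr 1
      rw [hD1, hD2, hdetS]; ring
    calc f * σ22 = Real.sqrt D2 * Real.sqrt (σ22 ^ 2) := by
          rw [hfdef, Real.sqrt_sq hσ22.le]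
      _ = Real.sqrt (D1 * (σ11 * σ22)) := h1
      _ = e * sm := by rw [Real.sqrt_mul hD1p.le, ← hedef, ← hsmdef]
  -- β facts
  have habs : |σ12| ≤ sm := by
    rw [hsmdef, ← Real.sqrt_sq_eq_abs]
    exact Real.sqrt_le_sqrt (by linarith)
  obtain ⟨habs1, habs2⟩ := abs_le.mp habs
  have hb1 : (-1 : ℝ) ≤ -σ12 / sm := by
    rw [le_div_iff₀ hsmp]; linarith
  have hb2 : -σ12 / sm ≤ 1 := by
    rw [div_le_one hsmp]; linarith
  have hcβ : Real.cos β * sm = -σ12 := by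
    rw [hβ, Real.cos_arccos hb1 hb2]
    field_simp
  have hsβ : Real.sin β * sm = sd := by
    rw [hβ, Real.sin_arccos]
    have harg : 1 - (-σ12 / sm) ^ 2 = (sd / sm) ^ 2 := by
      field_simp
      linear_combination hsm2 - hsd2 - hdetS
    rw [harg, Real.sqrt_sq (div_nonneg hsdp.le hsmp.le)]
    field_simp
  -- δ facts
  have hsδp : 0 < Real.sin δ := Real.sin_pos_of_pos_of_lt_pi hδ.1 hδ.2
  have hw : Real.sqrt (σ22 / σ11) * sm = σ22 := by
    rw [hsmdef, ← Real.sqrt_mul (div_nonneg hσ22.le hσ11.le)]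
    rw [show σ22 / σ11 * (σ11 * σ22) = σ22 ^ 2 by field_simp]
    exact Real.sqrt_sq hσ22.le
  have hδm : sd * Real.cos δ = (ρ * σ22 - σ12) * Real.sin δ := by
    have h2 : (Real.sin β * sm) * Real.cos δ =
        (ρ * (Real.sqrt (σ22 / σ11) * sm) + Real.cos β * sm) * Real.sin δ := by
      linear_combination sm * hδeq
    rw [hsβ, hw, hcβ] at h2
    linear_combination h2
  -- Q facts
  have hq2 : 0 < σ22 * (σ11 - 2 * σ12 * ρ + σ22 * ρ ^ 2) := by
    have h1 : σ22 * (σ11 - 2 * σ12 * ρ + σ22 * ρ ^ 2) =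
        (σ22 * ρ - σ12) ^ 2 + (σ11 * σ22 - σ12 ^ 2) := by ring
    have h2 := sq_nonneg (σ22 * ρ - σ12)
    linarith [h1.ge, h1.le]
  have hQpos : 0 < σ11 - 2 * σ12 * ρ + σ22 * ρ ^ 2 := by
    have h3 : σ11 - 2 * σ12 * ρ + σ22 * ρ ^ 2 =
        (σ22 * (σ11 - 2 * σ12 * ρ + σ22 * ρ ^ 2)) / σ22 := by field_simp
    rw [h3]; exact div_pos hq2 hσ22
  have hxQ : xstar * (σ11 - 2 * σ12 * ρ + σ22 * ρ ^ 2) = 2 * (μ2 * ρ - μ1) := by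
    rw [hxstar]; exact div_mul_cancel₀ _ hQpos.ne'
  have hpyth : Real.sin δ ^ 2 + Real.cos δ ^ 2 = 1 := Real.sin_sq_add_cos_sq δ
  have hP1 : Real.sin δ ^ 2 * (σ22 * (σ11 - 2 * σ12 * ρ + σ22 * ρ ^ 2)) = detS := by
    linear_combination (-(Real.sin δ ^ 2)) * hdetS + (1 - Real.sin δ ^ 2) * hsd2 +
      sd ^ 2 * hpyth + (-(sd * Real.cos δ + (ρ * σ22 - σ12) * Real.sin δ)) * hδm
  have hP2 : (Real.sin δ * Real.cos δ) * (σ22 * (σ11 - 2 * σ12 * ρ + σ22 * ρ ^ 2)) =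
      (ρ * σ22 - σ12) * sd := by
    apply mul_left_cancel₀ hsdp.ne'
    calc sd * ((Real.sin δ * Real.cos δ) * (σ22 * (σ11 - 2 * σ12 * ρ + σ22 * ρ ^ 2)))
        = (sd * Real.cos δ) * Real.sin δ * (σ22 * (σ11 - 2 * σ12 * ρ + σ22 * ρ ^ 2)) := by ring
      _ = ((ρ * σ22 - σ12) * Real.sin δ) * Real.sin δ *
          (σ22 * (σ11 - 2 * σ12 * ρ + σ22 * ρ ^ 2)) := by rw [hδm]
      _ = (ρ * σ22 - σ12) * (Real.sin δ ^ 2 * (σ22 * (σ11 - 2 * σ12 * ρ + σ22 * ρ ^ 2))) := by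
          ring
      _ = (ρ * σ22 - σ12) * detS := by rw [hP1]
      _ = sd * ((ρ * σ22 - σ12) * sd) := by rw [← hsd2]; ring
  -- sin/cos of (δ - β)
  have hsdb : sm * Real.sin (δ - β) = -(ρ * σ22) * Real.sin δ := by
    apply mul_left_cancel₀ hsdp.ne'
    rw [Real.sin_sub]
    calc sd * (sm * (Real.sin δ * Real.cos β - Real.cos δ * Real.sin β))
        = (Real.cos β * sm) * (sd * Real.sin δ) - (sd * Real.cos δ) * (Real.sin β * sm) := by ring
      _ = (-σ12) * (sd * Real.sin δ) - ((ρ * σ22 - σ12) * Real.sin δ) * sd := by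
          rw [hcβ, hδm, hsβ]
      _ = sd * (-(ρ * σ22) * Real.sin δ) := by ring
  have hcdb : sm * sd * Real.cos (δ - β) = σ22 * (σ11 - ρ * σ12) * Real.sin δ := by
    rw [Real.cos_sub]
    calc sm * sd * (Real.cos δ * Real.cos β + Real.sin δ * Real.sin β)
        = (sd * Real.cos δ) * (Real.cos β * sm) + (sd * Real.sin δ) * (Real.sin β * sm) := by ring
      _ = ((ρ * σ22 - σ12) * Real.sin δ) * (-σ12) + (sd * Real.sin δ) * sd := by
          rw [hδm, hcβ, hsβ]
      _ = Real.sin δ * sd ^ 2 - Real.sin δ * (σ12 * (ρ * σ22 - σ12)) := by ring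
      _ = Real.sin δ * detS - Real.sin δ * (σ12 * (ρ * σ22 - σ12)) := by rw [hsd2]
      _ = σ22 * (σ11 - ρ * σ12) * Real.sin δ := by rw [hdetS]; ring
  have hP3 : Real.sin (δ - β) ^ 2 * (σ11 * (σ11 - 2 * σ12 * ρ + σ22 * ρ ^ 2)) =
      ρ ^ 2 * detS := by
    apply mul_left_cancel₀ (show (σ22 : ℝ) ≠ 0 from hσ22.ne')
    calc σ22 * (Real.sin (δ - β) ^ 2 * (σ11 * (σ11 - 2 * σ12 * ρ + σ22 * ρ ^ 2)))
        = (sm * Real.sin (δ - β)) ^ 2 * (σ11 - 2 * σ12 * ρ + σ22 * ρ ^ 2) := by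
          linear_combination (-((σ11 - 2 * σ12 * ρ + σ22 * ρ ^ 2) * Real.sin (δ - β) ^ 2)) * hsm2
      _ = (-(ρ * σ22) * Real.sin δ) ^ 2 * (σ11 - 2 * σ12 * ρ + σ22 * ρ ^ 2) := by rw [hsdb]
      _ = (ρ ^ 2 * σ22) * (Real.sin δ ^ 2 * (σ22 * (σ11 - 2 * σ12 * ρ + σ22 * ρ ^ 2))) := by ring
      _ = (ρ ^ 2 * σ22) * detS := by rw [hP1]
      _ = σ22 * (ρ ^ 2 * detS) := by ring
  have hP4 : (Real.sin (δ - β) * Real.cos (δ - β)) *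
      (σ11 * (σ11 - 2 * σ12 * ρ + σ22 * ρ ^ 2)) = -(ρ * (σ11 - ρ * σ12)) * sd := by
    apply mul_left_cancel₀ (show sm ^ 2 * sd ≠ 0 from (mul_pos (pow_pos hsmp 2) hsdp).ne')
    calc sm ^ 2 * sd * ((Real.sin (δ - β) * Real.cos (δ - β)) *
          (σ11 * (σ11 - 2 * σ12 * ρ + σ22 * ρ ^ 2)))
        = (sm * Real.sin (δ - β)) * (sm * sd * Real.cos (δ - β)) *
          (σ11 * (σ11 - 2 * σ12 * ρ + σ22 * ρ ^ 2)) := by ring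
      _ = (-(ρ * σ22) * Real.sin δ) * (σ22 * (σ11 - ρ * σ12) * Real.sin δ) *
          (σ11 * (σ11 - 2 * σ12 * ρ + σ22 * ρ ^ 2)) := by rw [hsdb, hcdb]
      _ = (-(ρ * σ22 * (σ11 - ρ * σ12) * σ11)) *
          (Real.sin δ ^ 2 * (σ22 * (σ11 - 2 * σ12 * ρ + σ22 * ρ ^ 2))) := by ring
      _ = (-(ρ * σ22 * (σ11 - ρ * σ12) * σ11)) * detS := by rw [hP1]
      _ = sm ^ 2 * sd * (-(ρ * (σ11 - ρ * σ12)) * sd) := by rw [hsm2, ← hsd2]; ring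
  -- x-range facts
  have hxd2 : xmax - xmin = 2 * e / detS := by rw [hxmax, hxmin]; ring
  have hxs2 : xmax + xmin = 2 * (μ2 * σ12 - μ1 * σ22) / detS := by rw [hxmax, hxmin]; ring
  have hxdm : (xmax - xmin) * detS = 2 * e := by rw [hxd2]; field_simp
  have hxsm2 : (xmax + xmin) * detS = 2 * (μ2 * σ12 - μ1 * σ22) := by rw [hxs2]; field_simp
  have hydm : (ymax - ymin) * detS = 2 * f := by
    rw [hymax, hymin]; field_simp; ring
  have hysm2 : (ymax + ymin) * detS = 2 * (μ1 * σ12 - μ2 * σ11) := by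
    rw [hymax, hymin]; field_simp; ring
  have hxdpos : 0 < xmax - xmin := by
    rw [hxd2]; exact div_pos (by linarith) hdetS0
  have haK : |μ2 * σ12 - μ1 * σ22| ≤ e := by
    rw [hedef, ← Real.sqrt_sq_eq_abs]
    apply Real.sqrt_le_sqrt
    rw [hD1]
    have h1 := mul_pos (pow_pos hμ2 2) hdetS0
    linarith
  obtain ⟨hbnd, ha⟩ := abs_le.mp haK
  have hsle : xmax + xmin ≤ xmax - xmin := by
    rw [hxd2, hxs2]
    exact (div_le_div_iff_of_pos_right hdetS0).mpr (by linarith)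
  have hneg : -(xmax - xmin) ≤ xmax + xmin := by
    have h1 : (-(2 * e)) / detS ≤ 2 * (μ2 * σ12 - μ1 * σ22) / detS :=
      (div_le_div_iff_of_pos_right hdetS0).mpr (by linarith)
    rw [neg_div] at h1
    rw [hxd2, hxs2]
    exact h1
  have hv1 : (-1 : ℝ) ≤ -(xmax + xmin) / (xmax - xmin) := by
    rw [le_div_iff₀ hxdpos]; linarith
  have hv2 : -(xmax + xmin) / (xmax - xmin) ≤ 1 := by
    rw [div_le_one hxdpos]; linarith
  have hcθe : Real.cos θ * e = μ1 * σ22 - μ2 * σ12 := by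
    rw [hθ, Real.cos_arccos hv1 hv2, hxd2, hxs2]
    field_simp
    ring
  have hsθe : Real.sin θ * e = μ2 * sd := by
    rw [hθ, Real.sin_arccos]
    have harg : 1 - (-(xmax + xmin) / (xmax - xmin)) ^ 2 = (μ2 * sd / e) ^ 2 := by
      rw [hxd2, hxs2]
      field_simp
      linear_combination he2 + hD1 +
        (-(μ2 ^ 2)) * hsd2
    rw [harg, Real.sqrt_sq (div_nonneg (mul_nonneg hμ2.le hsdp.le) hep.le),
      div_mul_cancel₀ _ hep.ne']
  -- combined B facts for x
  have hBc : ((xmax - xmin) / 2) * Real.cos θ * detS = μ1 * σ22 - μ2 * σ12 := by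
    calc ((xmax - xmin) / 2) * Real.cos θ * detS
        = ((xmax - xmin) * detS) * Real.cos θ / 2 := by ring
      _ = (2 * e) * Real.cos θ / 2 := by rw [hxdm]
      _ = Real.cos θ * e := by ring
      _ = μ1 * σ22 - μ2 * σ12 := hcθe
  have hBs : ((xmax - xmin) / 2) * Real.sin θ * detS = μ2 * sd := by
    calc ((xmax - xmin) / 2) * Real.sin θ * detS
        = ((xmax - xmin) * detS) * Real.sin θ / 2 := by ring
      _ = (2 * e) * Real.sin θ / 2 := by rw [hxdm]
      _ = Real.sin θ * e := by ring
      _ = μ2 * sd := hsθe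
  have hXs : ((xmax + xmin) / 2) * detS = μ2 * σ12 - μ1 * σ22 := by
    calc ((xmax + xmin) / 2) * detS = ((xmax + xmin) * detS) / 2 := by ring
      _ = (2 * (μ2 * σ12 - μ1 * σ22)) / 2 := by rw [hxsm2]
      _ = μ2 * σ12 - μ1 * σ22 := by ring
  -- y-side facts
  have hfc : f * Real.cos (θ - β) = μ2 * σ11 - μ1 * σ12 := by
    apply mul_left_cancel₀ (show e * sm ≠ 0 from (mul_pos hep hsmp).ne')
    rw [Real.cos_sub]
    calc e * sm * (f * (Real.cos θ * Real.cos β + Real.sin θ * Real.sin β))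
        = f * ((Real.cos θ * e) * (Real.cos β * sm) + (Real.sin θ * e) * (Real.sin β * sm)) := by
          ring
      _ = f * ((μ1 * σ22 - μ2 * σ12) * (-σ12) + (μ2 * sd) * sd) := by
          rw [hcθe, hsθe, hcβ, hsβ]
      _ = f * ((μ1 * σ22 - μ2 * σ12) * (-σ12)) + f * μ2 * sd ^ 2 := by ring
      _ = f * ((μ1 * σ22 - μ2 * σ12) * (-σ12)) + f * μ2 * detS := by rw [hsd2]
      _ = (f * σ22) * (μ2 * σ11 - μ1 * σ12) := by rw [hdetS]; ring
      _ = (e * sm) * (μ2 * σ11 - μ1 * σ12) := by rw [hkeym]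
  have hfs : f * Real.sin (θ - β) = -(μ1 * sd) := by
    apply mul_left_cancel₀ (show e * sm ≠ 0 from (mul_pos hep hsmp).ne')
    rw [Real.sin_sub]
    calc e * sm * (f * (Real.sin θ * Real.cos β - Real.cos θ * Real.sin β))
        = f * ((Real.sin θ * e) * (Real.cos β * sm) - (Real.cos θ * e) * (Real.sin β * sm)) := by
          ring
      _ = f * ((μ2 * sd) * (-σ12) - (μ1 * σ22 - μ2 * σ12) * sd) := by
          rw [hsθe, hcθe, hcβ, hsβ]
      _ = (f * σ22) * (-(μ1 * sd)) := by ring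
      _ = (e * sm) * (-(μ1 * sd)) := by rw [hkeym]
  have hYc : ((ymax - ymin) / 2) * Real.cos (θ - β) * detS = μ2 * σ11 - μ1 * σ12 := by
    calc ((ymax - ymin) / 2) * Real.cos (θ - β) * detS
        = ((ymax - ymin) * detS) * Real.cos (θ - β) / 2 := by ring
      _ = (2 * f) * Real.cos (θ - β) / 2 := by rw [hydm]
      _ = f * Real.cos (θ - β) := by ring
      _ = μ2 * σ11 - μ1 * σ12 := hfc
  have hYsin : ((ymax - ymin) / 2) * Real.sin (θ - β) * detS = -(μ1 * sd) := by
    calc ((ymax - ymin) / 2) * Real.sin (θ - β) * detS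
        = ((ymax - ymin) * detS) * Real.sin (θ - β) / 2 := by ring
      _ = (2 * f) * Real.sin (θ - β) / 2 := by rw [hydm]
      _ = f * Real.sin (θ - β) := by ring
      _ = -(μ1 * sd) := hfs
  have hYs : ((ymax + ymin) / 2) * detS = μ1 * σ12 - μ2 * σ11 := by
    calc ((ymax + ymin) / 2) * detS = ((ymax + ymin) * detS) / 2 := by ring
      _ = (2 * (μ1 * σ12 - μ2 * σ11)) / 2 := by rw [hysm2]
      _ = μ1 * σ12 - μ2 * σ11 := by ring
  have hpyth2 : Real.sin (δ - β) ^ 2 + Real.cos (δ - β) ^ 2 = 1 := Real.sin_sq_add_cos_sq _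
  constructor
  · rw [hxt]
    apply mul_left_cancel₀ (show detS * (σ22 * (σ11 - 2 * σ12 * ρ + σ22 * ρ ^ 2)) ≠ 0 from
      (mul_pos hdetS0 (mul_pos hσ22 hQpos)).ne')
    rw [Real.cos_sub, Real.cos_two_mul, Real.sin_two_mul]
    linear_combination
      (σ22 * (σ11 - 2 * σ12 * ρ + σ22 * ρ ^ 2)) * hXs +
      ((2 * Real.cos δ ^ 2 - 1) * σ22 * (σ11 - 2 * σ12 * ρ + σ22 * ρ ^ 2)) * hBc +
      (2 * Real.sin δ * Real.cos δ * σ22 * (σ11 - 2 * σ12 * ρ + σ22 * ρ ^ 2)) * hBs +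
      (2 * μ2 * sd) * hP2 +
      (2 * μ2 * (ρ * σ22 - σ12)) * hsd2 +
      (2 * σ22 * (σ11 - 2 * σ12 * ρ + σ22 * ρ ^ 2) * (μ1 * σ22 - μ2 * σ12)) * hpyth +
      (-2 * (μ1 * σ22 - μ2 * σ12)) * hP1 +
      (-(detS * σ22)) * hxQ
  · rw [hyt]
    apply mul_left_cancel₀ (show detS * (σ11 * (σ11 - 2 * σ12 * ρ + σ22 * ρ ^ 2)) ≠ 0 from
      (mul_pos hdetS0 (mul_pos hσ11 hQpos)).ne')
    rw [show (2 * δ - θ - β : ℝ) = 2 * (δ - β) - (θ - β) by ring,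
      Real.cos_sub (2 * (δ - β)) (θ - β), Real.cos_two_mul, Real.sin_two_mul]
    linear_combination
      (σ11 * (σ11 - 2 * σ12 * ρ + σ22 * ρ ^ 2)) * hYs +
      ((2 * Real.cos (δ - β) ^ 2 - 1) * σ11 * (σ11 - 2 * σ12 * ρ + σ22 * ρ ^ 2)) * hYc +
      (2 * Real.sin (δ - β) * Real.cos (δ - β) * σ11 * (σ11 - 2 * σ12 * ρ + σ22 * ρ ^ 2)) * hYsin +
      (-2 * μ1 * sd) * hP4 +
      (2 * ρ * μ1 * (σ11 - ρ * σ12)) * hsd2 +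
      (2 * σ11 * (σ11 - 2 * σ12 * ρ + σ22 * ρ ^ 2) * (μ2 * σ11 - μ1 * σ12)) * hpyth2 +
      (-2 * (μ2 * σ11 - μ1 * σ12)) * hP3 +
      (ρ * detS * σ11) * hxQ
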